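/- For a finite set S = {s₁ < s₂ < ... < s_n} of positive integers define f(S) ∈ ℚ(q) by f(S) = 2^{−n(n−1)} · q^{−Σ_{i=1}^{n}(i−1)(4s_i−2i−1)} · ∏_{1≤i<j≤n}[2(s_i+s_j−1)]_{q²}[2(s_j−s_i)]_{q²} / ∏_{i=1}^{n}[2i−2]_{q²}!, with f(∅) = 1 and f of a singleton = 1. Then for every such S with n ≥ 2 and every integer α with s₁ < α < s_n and α ∉ S, the following identity holds in ℚ(q): f(S)·f((S∖{s₁,s_n})∪{α}) = f((S∖{s₁})∪{α})·f(S∖{s_n}) + f(S∖{s₁})·f((S∖{s_n})∪{α}). -/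

import Mathlib

/-- The q²-integer `[k]_{q²} = 1 + q² + ... + q^(2(k-1))` in `ℚ(q)`. -/
noncomputable def q2int (n : ℕ) : RatFunc ℚ :=
  ∑ i ∈ Finset.range n, RatFunc.X ^ (2 * i)

/-- The q²-factorial `[k]_{q²}! = [1]_{q²}[2]_{q²}⋯[k]_{q²}`. -/
noncomputable def q2fact (k : ℕ) : RatFunc ℚ :=
  ∏ i ∈ Finset.range k, q2int (i + 1)

/-- The product formula `f(S)` for the tiling generating function of the quartered hexagon
`R¹_x(s₁,…,s_n)`, where `s₁ < s₂ < ⋯ < s_n` are the elements of `S` in increasing order. -/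
noncomputable def fR1 (S : Finset ℤ) : RatFunc ℚ :=
  let n := S.card
  let l := S.sort (· ≤ ·)
  (2 : RatFunc ℚ) ^ (-(n * (n - 1) : ℤ))
    * RatFunc.X ^ (-(∑ i ∈ Finset.range n,
        (i : ℤ) * (4 * l.getD i 0 - 2 * ((i : ℤ) + 1) - 1)))
    * ((∏ j ∈ Finset.range n, ∏ i ∈ Finset.range j,
          q2int (2 * (l.getD i 0 + l.getD j 0 - 1)).toNat
            * q2int (2 * (l.getD j 0 - l.getD i 0)).toNat)
        / ∏ i ∈ Finset.range n, q2fact (2 * i))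

noncomputable def hqq (x y : ℤ) : RatFunc ℚ :=
  q2int (2 * (x + y - 1)).toNat * q2int (2 * (y - x)).toNat

noncomputable def Pq : List ℤ → RatFunc ℚ
  | [] => 1
  | x :: l => (l.map (hqq x)).prod * Pq l

def El (l : List ℤ) : ℤ :=
  ∑ i ∈ Finset.range l.length, (i : ℤ) * (4 * l.getD i 0 - 2 * ((i : ℤ) + 1) - 1)

-- sum over range of getD = list sum
lemma sum_getD (l : List ℤ) : ∑ i ∈ Finset.range l.length, l.getD i 0 = l.sum := by
  induction l with
  | nil => simp
  | cons x l ih =>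
    rw [List.length_cons, Finset.sum_range_succ']
    simp only [List.getD_cons_succ, List.getD_cons_zero, List.sum_cons, ih]
    ring

lemma sum_id_int (n : ℕ) : (∑ i ∈ Finset.range n, (i : ℤ)) * 2 = (n : ℤ) * ((n : ℤ) - 1) := by
  induction n with
  | zero => simp
  | succ n ih => rw [Finset.sum_range_succ, add_mul, ih]; push_cast; ring

lemma El_cons (x : ℤ) (l : List ℤ) :
    El (x :: l) = El l + 4 * l.sum - 2 * (l.length : ℤ) * ((l.length : ℤ) - 1)
      - 5 * (l.length : ℤ) := by
  rw [El, List.length_cons, Finset.sum_range_succ']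
  simp only [List.getD_cons_succ, List.getD_cons_zero, Nat.cast_add, Nat.cast_one,
    Nat.cast_zero, zero_mul, add_zero]
  have expand : (∑ i ∈ Finset.range l.length, ((i:ℤ)+1)*(4*l.getD i 0 - 2*((i:ℤ)+1+1) - 1))
      = ∑ i ∈ Finset.range l.length,
        ((i:ℤ)*(4*l.getD i 0 - 2*((i:ℤ)+1) - 1) + (4*l.getD i 0 - 4*(i:ℤ) - 5)) :=
    Finset.sum_congr rfl (fun i _ => by ring)
  rw [expand, Finset.sum_add_distrib]
  have expand2 : ∑ i ∈ Finset.range l.length, (4*l.getD i 0 - 4*(i:ℤ) - 5)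
      = 4*l.sum - (∑ i ∈ Finset.range l.length, (i:ℤ))*4 - 5*(l.length:ℤ) := by
    rw [Finset.sum_sub_distrib, Finset.sum_sub_distrib, ← Finset.mul_sum, sum_getD,
      Finset.sum_const, Finset.card_range, nsmul_eq_mul, ← Finset.mul_sum]
    ring
  rw [expand2, ← El]
  linear_combination (-2 : ℤ) * sum_id_int l.length

lemma El_append_singleton (l : List ℤ) (c : ℤ) :
    El (l ++ [c]) = El l + (l.length : ℤ) * (4 * c - 2 * ((l.length : ℤ) + 1) - 1) := by
  rw [El, List.length_append, List.length_singleton, Finset.sum_range_succ]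
  congr 1
  · rw [El]
    refine Finset.sum_congr rfl (fun i hi => ?_)
    rw [List.getD_append _ _ _ _ (Finset.mem_range.mp hi)]
  · rw [List.getD_append_right _ _ _ _ (le_refl _), Nat.sub_self]
    rfl

lemma prod_map_getD (g : ℤ → RatFunc ℚ) (l : List ℤ) :
    ∏ j ∈ Finset.range l.length, g (l.getD j 0) = (l.map g).prod := by
  induction l with
  | nil => simp
  | cons x l ih =>
    rw [List.length_cons, Finset.prod_range_succ']
    simp only [List.getD_cons_succ, List.getD_cons_zero, List.map_cons, List.prod_cons, ih]
    ring

lemma dp (l : List ℤ) :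
    ∏ j ∈ Finset.range l.length, ∏ i ∈ Finset.range j,
        (q2int (2 * (l.getD i 0 + l.getD j 0 - 1)).toNat
          * q2int (2 * (l.getD j 0 - l.getD i 0)).toNat) = Pq l := by
  induction l with
  | nil => simp [Pq]
  | cons x l ih =>
    rw [List.length_cons, Finset.prod_range_succ']
    have inner : ∀ j, ∏ i ∈ Finset.range (j+1),
        (q2int (2 * ((x::l).getD i 0 + (x::l).getD (j+1) 0 - 1)).toNat
          * q2int (2 * ((x::l).getD (j+1) 0 - (x::l).getD i 0)).toNat)
        = (∏ i ∈ Finset.range j,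
            (q2int (2 * (l.getD i 0 + l.getD j 0 - 1)).toNat
              * q2int (2 * (l.getD j 0 - l.getD i 0)).toNat)) * hqq x (l.getD j 0) := by
      intro j
      rw [Finset.prod_range_succ']
      simp only [List.getD_cons_succ, List.getD_cons_zero]
      rfl
    rw [Finset.prod_congr rfl (fun j _ => inner j), Finset.prod_mul_distrib, ih,
      prod_map_getD (hqq x) l]
    simp [Pq]
    ring

lemma Pq_cons (x : ℤ) (l : List ℤ) : Pq (x :: l) = (l.map (hqq x)).prod * Pq l := rfl

lemma Pq_append_singleton (l : List ℤ) (c : ℤ) :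
    Pq (l ++ [c]) = Pq l * (l.map (fun t => hqq t c)).prod := by
  induction l with
  | nil => simp [Pq]
  | cons x l ih =>
    simp only [List.cons_append, Pq_cons, ih, List.map_append, List.map_cons, List.map_nil,
      List.prod_append, List.prod_cons, List.prod_nil]
    ring

lemma X2_sub_one_ne_zero : (RatFunc.X ^ 2 - 1 : RatFunc ℚ) ≠ 0 := by
  have h : (RatFunc.X ^ 2 - 1 : RatFunc ℚ)
      = algebraMap (Polynomial ℚ) (RatFunc ℚ) (Polynomial.X ^ 2 - Polynomial.C 1) := by
    rw [map_sub, map_pow, RatFunc.algebraMap_X, Polynomial.C_1, map_one]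
  rw [h]
  exact RatFunc.algebraMap_ne_zero (Polynomial.X_pow_sub_C_ne_zero two_pos 1)

lemma gs (k : ℕ) : q2int k * (RatFunc.X ^ 2 - 1) = (RatFunc.X ^ 2 : RatFunc ℚ) ^ k - 1 := by
  rw [q2int, ← geom_sum_mul (RatFunc.X ^ 2 : RatFunc ℚ) k]
  congr 1
  exact Finset.sum_congr rfl fun i _ => by rw [pow_mul]

lemma q2core (A V U : ℕ) :
    q2int (2*(2*A+V+U+3)) * q2int (2*(V+U+2))
      = q2int (2*(2*A+2*V+U+4)) * q2int (2*(U+1))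
        + RatFunc.X ^ (4*U+4) * (q2int (2*(2*A+V+2)) * q2int (2*(V+1))) := by
  apply mul_right_cancel₀ (pow_ne_zero 2 X2_sub_one_ne_zero)
  calc q2int (2*(2*A+V+U+3)) * q2int (2*(V+U+2)) * (RatFunc.X ^ 2 - 1)^2
      = (q2int (2*(2*A+V+U+3)) * (RatFunc.X ^ 2 - 1))
        * (q2int (2*(V+U+2)) * (RatFunc.X ^ 2 - 1)) := by ring
    _ = ((RatFunc.X ^ 2 : RatFunc ℚ) ^ (2*(2*A+V+U+3)) - 1)
        * ((RatFunc.X ^ 2 : RatFunc ℚ) ^ (2*(V+U+2)) - 1) := by rw [gs, gs]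
    _ = ((RatFunc.X ^ 2 : RatFunc ℚ) ^ (2*(2*A+2*V+U+4)) - 1)
          * ((RatFunc.X ^ 2 : RatFunc ℚ) ^ (2*(U+1)) - 1)
        + RatFunc.X ^ (4*U+4)
          * (((RatFunc.X ^ 2 : RatFunc ℚ) ^ (2*(2*A+V+2)) - 1)
            * ((RatFunc.X ^ 2 : RatFunc ℚ) ^ (2*(V+1)) - 1)) := by ring
    _ = (q2int (2*(2*A+2*V+U+4)) * (RatFunc.X ^ 2 - 1))
          * (q2int (2*(U+1)) * (RatFunc.X ^ 2 - 1))
        + RatFunc.X ^ (4*U+4)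
          * ((q2int (2*(2*A+V+2)) * (RatFunc.X ^ 2 - 1))
            * (q2int (2*(V+1)) * (RatFunc.X ^ 2 - 1))) := by rw [gs, gs, gs, gs]
    _ = (q2int (2*(2*A+2*V+U+4)) * q2int (2*(U+1))
        + RatFunc.X ^ (4*U+4) * (q2int (2*(2*A+V+2)) * q2int (2*(V+1))))
          * (RatFunc.X ^ 2 - 1)^2 := by ring

lemma core (a b c : ℤ) (ha : 0 < a) (hab : a < b) (hbc : b < c) :
    hqq a c = hqq b c + RatFunc.X ^ (4*(c-b)).toNat * hqq a b := by
  obtain ⟨A, hA⟩ : ∃ A : ℕ, a = (A : ℤ) + 1 := ⟨(a-1).toNat, by omega⟩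
  obtain ⟨V, hV⟩ : ∃ V : ℕ, b = a + (V : ℤ) + 1 := ⟨(b-a-1).toNat, by omega⟩
  obtain ⟨U, hU⟩ : ∃ U : ℕ, c = b + (U : ℤ) + 1 := ⟨(c-b-1).toNat, by omega⟩
  have e1 : (2*(a+c-1)).toNat = 2*(2*A+V+U+3) := by omega
  have e2 : (2*(c-a)).toNat = 2*(V+U+2) := by omega
  have e3 : (2*(b+c-1)).toNat = 2*(2*A+2*V+U+4) := by omega
  have e4 : (2*(c-b)).toNat = 2*(U+1) := by omega
  have e5 : (2*(a+b-1)).toNat = 2*(2*A+V+2) := by omega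
  have e6 : (2*(b-a)).toNat = 2*(V+1) := by omega
  have e7 : (4*(c-b)).toNat = 4*U+4 := by omega
  rw [hqq, hqq, hqq, e1, e2, e3, e4, e5, e6, e7]
  exact q2core A V U


noncomputable def FL (l : List ℤ) : RatFunc ℚ :=
  (2 : RatFunc ℚ) ^ (-(l.length * (l.length - 1) : ℤ))
    * RatFunc.X ^ (-(El l))
    * (Pq l / ∏ i ∈ Finset.range l.length, q2fact (2 * i))

lemma fR1_eq_FL (S : Finset ℤ) : fR1 S = FL (S.sort (· ≤ ·)) := by
  rw [fR1, FL, El, ← dp]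
  rw [show S.card = (S.sort (· ≤ ·)).length from (Finset.length_sort _).symm]

lemma sort_insert_split (F : Finset ℤ) (x : ℤ) (L₁ L₂ : List ℤ)
    (hs : F.sort (· ≤ ·) = L₁ ++ L₂)
    (hl : ∀ y ∈ L₁, y < x) (hr : ∀ y ∈ L₂, x < y) :
    (insert x F).sort (· ≤ ·) = L₁ ++ x :: L₂ := by
  have hx : x ∉ F := by
    intro hxF
    have hmem : x ∈ F.sort (· ≤ ·) := (Finset.mem_sort _).mpr hxF
    rw [hs, List.mem_append] at hmem
    rcases hmem with h | h
    · exact absurd rfl (ne_of_lt (hl x h))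
    · exact absurd rfl (ne_of_lt (hr x h))
  refine (fun hp hs => List.Perm.eq_of_pairwise' (Finset.pairwise_sort _ _) hs hp) ?_ ?_
  · -- permutation
    refine ((Finset.sort_perm_toList _ _).trans ((Finset.toList_insert hx).trans ?_))
    refine (List.Perm.cons x (Finset.sort_perm_toList F (· ≤ ·)).symm).trans ?_
    rw [hs]
    exact List.perm_middle.symm
  · -- sortedness of target
    have hsorted : List.Pairwise (· ≤ ·) (L₁ ++ L₂) := hs ▸ Finset.pairwise_sort F _
    rw [List.pairwise_append] at hsorted
    obtain ⟨p1, p2, cross⟩ := hsorted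
    rw [List.pairwise_append]
    refine ⟨p1, List.pairwise_cons.mpr ⟨fun y hy => le_of_lt (hr y hy), p2⟩, ?_⟩
    intro y hy z hz
    rcases List.mem_cons.mp hz with rfl | hz
    · exact le_of_lt (hl y hy)
    · exact cross y hy z hz

lemma sort_filter_split (F : Finset ℤ) (x : ℤ) (hx : x ∉ F) :
    F.sort (· ≤ ·) = (F.sort (· ≤ ·)).filter (fun y => y < x)
      ++ (F.sort (· ≤ ·)).filter (fun y => x < y) := by
  have hne : ∀ y ∈ F.sort (· ≤ ·), y ≠ x := by
    intro y hy
    rintro rfl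
    exact hx ((Finset.mem_sort _).mp hy)
  have hfe : (F.sort (· ≤ ·)).filter (fun y => x < y)
      = (F.sort (· ≤ ·)).filter (fun y => !decide (y < x)) := by
    apply List.filter_congr
    intro y hy
    have : y ≠ x := hne y hy
    rw [← decide_not]
    exact decide_eq_decide.mpr (by omega)
  rw [hfe]
  refine List.Perm.eq_of_pairwise' (Finset.pairwise_sort _ _) ?_ (List.filter_append_perm _ _).symm
  have hsorted : List.Pairwise (· ≤ ·) (F.sort (· ≤ ·)) := Finset.pairwise_sort F _
  rw [List.pairwise_append]
  refine ⟨hsorted.filter _, hsorted.filter _, ?_⟩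
  intro y hy z hz
  have hy' : y < x := by
    have := (List.mem_filter.mp hy).2
    simpa using this
  have hz' : ¬ z < x := by
    have := (List.mem_filter.mp hz).2
    simpa using this
  omega

lemma main_list (a α c : ℤ) (M₁ M₂ : List ℤ) (ha : 0 < a) (haα : a < α) (hαc : α < c) :
    FL (a :: ((M₁ ++ M₂) ++ [c])) * FL (M₁ ++ α :: M₂)
      = FL ((M₁ ++ α :: M₂) ++ [c]) * FL (a :: (M₁ ++ M₂))
        + FL ((M₁ ++ M₂) ++ [c]) * FL (a :: (M₁ ++ α :: M₂)) := by
  have e_eq : El ((M₁ ++ α :: M₂) ++ [c]) + El (a :: (M₁ ++ M₂))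
      = El (a :: ((M₁ ++ M₂) ++ [c])) + El (M₁ ++ α :: M₂) := by
    simp only [El_cons, El_append_singleton, List.sum_append, List.sum_cons, List.sum_nil,
      List.length_append, List.length_cons, List.length_singleton, List.length_nil]
    push_cast
    ring
  have e_eq2 : El ((M₁ ++ M₂) ++ [c]) + El (a :: (M₁ ++ α :: M₂))
      = El (a :: ((M₁ ++ M₂) ++ [c])) + El (M₁ ++ α :: M₂) + (4 * α - 4 * c) := by
    simp only [El_cons, El_append_singleton, List.sum_append, List.sum_cons, List.sum_nil,
      List.length_append, List.length_cons, List.length_singleton, List.length_nil]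
    push_cast
    ring
  have hX1 : RatFunc.X ^ (-(El ((M₁ ++ α :: M₂) ++ [c]))) * RatFunc.X ^ (-(El (a :: (M₁ ++ M₂))))
      = (RatFunc.X : RatFunc ℚ) ^ (-(El (a :: ((M₁ ++ M₂) ++ [c]))))
        * RatFunc.X ^ (-(El (M₁ ++ α :: M₂))) := by
    rw [← zpow_add₀ RatFunc.X_ne_zero, ← zpow_add₀ RatFunc.X_ne_zero]
    congr 1
    omega
  have hX2 : RatFunc.X ^ (-(El ((M₁ ++ M₂) ++ [c]))) * RatFunc.X ^ (-(El (a :: (M₁ ++ α :: M₂))))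
      = (RatFunc.X : RatFunc ℚ) ^ (-(El (a :: ((M₁ ++ M₂) ++ [c]))))
        * RatFunc.X ^ (-(El (M₁ ++ α :: M₂))) * RatFunc.X ^ ((4 * (c - α)).toNat) := by
    rw [← zpow_add₀ RatFunc.X_ne_zero,
      ← zpow_natCast (RatFunc.X : RatFunc ℚ) ((4 * (c - α)).toNat),
      ← zpow_add₀ RatFunc.X_ne_zero, ← zpow_add₀ RatFunc.X_ne_zero]
    congr 1
    omega
  have hL1 : (a :: ((M₁ ++ M₂) ++ [c])).length = M₁.length + M₂.length + 2 := by
    simp only [List.length_cons, List.length_append, List.length_singleton, List.length_nil]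
  have hL2 : (M₁ ++ α :: M₂).length = M₁.length + M₂.length + 1 := by
    simp only [List.length_append, List.length_cons]; omega
  have hL3 : ((M₁ ++ α :: M₂) ++ [c]).length = M₁.length + M₂.length + 2 := by
    simp only [List.length_append, List.length_cons, List.length_singleton, List.length_nil]
    omega
  have hL4 : (a :: (M₁ ++ M₂)).length = M₁.length + M₂.length + 1 := by
    simp only [List.length_cons, List.length_append]
  have hL5 : ((M₁ ++ M₂) ++ [c]).length = M₁.length + M₂.length + 1 := by
    simp only [List.length_append, List.length_singleton, List.length_nil]
  have hL6 : (a :: (M₁ ++ α :: M₂)).length = M₁.length + M₂.length + 2 := by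
    simp only [List.length_cons, List.length_append]; omega
  have hcore := core a α c ha haα hαc
  simp only [FL]
  rw [hL1, hL2, hL3, hL4, hL5, hL6]
  simp only [Pq_cons, Pq_append_singleton, List.map_append, List.map_cons, List.map_nil,
    List.prod_append, List.prod_cons, List.prod_nil]
  set xA := (RatFunc.X : RatFunc ℚ) ^ (-(El (a :: ((M₁ ++ M₂) ++ [c])))) with hxA
  set xB := (RatFunc.X : RatFunc ℚ) ^ (-(El (M₁ ++ α :: M₂))) with hxB
  set xC := (RatFunc.X : RatFunc ℚ) ^ (-(El ((M₁ ++ α :: M₂) ++ [c]))) with hxC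
  set xD := (RatFunc.X : RatFunc ℚ) ^ (-(El (a :: (M₁ ++ M₂)))) with hxD
  set xE := (RatFunc.X : RatFunc ℚ) ^ (-(El ((M₁ ++ M₂) ++ [c]))) with hxE
  set xF := (RatFunc.X : RatFunc ℚ) ^ (-(El (a :: (M₁ ++ α :: M₂)))) with hxF
  set tP := (RatFunc.X : RatFunc ℚ) ^ ((4 * (c - α)).toNat) with htP
  set K2 := (2 : RatFunc ℚ)
    ^ (-((M₁.length + M₂.length + 2 : ℕ) * ((M₁.length + M₂.length + 2 : ℕ) - 1) : ℤ)) with hK2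
  set K1 := (2 : RatFunc ℚ)
    ^ (-((M₁.length + M₂.length + 1 : ℕ) * ((M₁.length + M₂.length + 1 : ℕ) - 1) : ℤ)) with hK1
  set D2 := ∏ i ∈ Finset.range (M₁.length + M₂.length + 2), q2fact (2 * i) with hD2
  set D1 := ∏ i ∈ Finset.range (M₁.length + M₂.length + 1), q2fact (2 * i) with hD1
  set A1 := (M₁.map (hqq a)).prod with hA1
  set A2 := (M₂.map (hqq a)).prod with hA2
  set C1 := (M₁.map (fun t => hqq t c)).prod with hC1
  set C2 := (M₂.map (fun t => hqq t c)).prod with hC2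
  set PM := Pq (M₁ ++ M₂) with hPM
  set PN := Pq (M₁ ++ α :: M₂) with hPN
  linear_combination (K2 * K1 * (A1 * A2 * C1 * C2 * PM * PN) / (D2 * D1)) * xA * xB * hcore
    - (K2 * K1 * (A1 * A2 * C1 * C2 * PM * PN) / (D2 * D1)) * hqq α c * hX1
    - (K2 * K1 * (A1 * A2 * C1 * C2 * PM * PN) / (D2 * D1)) * hqq a α * hX2

theorem stmt8 (S : Finset ℤ) (hpos : ∀ s ∈ S, 0 < s) (hne : S.Nonempty) (hcard : 2 ≤ S.card)
    (α : ℤ) (hα : α ∉ S) (h1 : S.min' hne < α) (h2 : α < S.max' hne) :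
    fR1 S * fR1 (insert α ((S.erase (S.min' hne)).erase (S.max' hne)))
      = fR1 (insert α (S.erase (S.min' hne))) * fR1 (S.erase (S.max' hne))
        + fR1 (S.erase (S.min' hne)) * fR1 (insert α (S.erase (S.max' hne))) := by
  set a := S.min' hne with haDef
  set c := S.max' hne with hcDef
  set T := (S.erase a).erase c with hTDef
  have haS : a ∈ S := S.min'_mem hne
  have hcS : c ∈ S := S.max'_mem hne
  have hac : a < c := h1.trans h2
  have ha0 : 0 < a := hpos a haS
  have hcSa : c ∈ S.erase a := Finset.mem_erase.mpr ⟨ne_of_gt hac, hcS⟩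
  have haSc : a ∈ S.erase c := Finset.mem_erase.mpr ⟨ne_of_lt hac, haS⟩
  have hT_c : insert c T = S.erase a := Finset.insert_erase hcSa
  have hT_a : insert a T = S.erase c := by
    rw [hTDef, Finset.erase_right_comm]
    exact Finset.insert_erase haSc
  have hS : insert a (insert c T) = S := by rw [hT_c]; exact Finset.insert_erase haS
  have hαT : α ∉ T := fun hmem => hα (Finset.mem_of_mem_erase (Finset.mem_of_mem_erase hmem))
  have hTbound : ∀ t ∈ T, a < t ∧ t < c := by
    intro t ht
    have h1' := Finset.mem_erase.mp ht
    have h2' := Finset.mem_erase.mp h1'.2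
    exact ⟨lt_of_le_of_ne (S.min'_le t h2'.2) (Ne.symm h2'.1),
      lt_of_le_of_ne (S.le_max' t h2'.2) h1'.1⟩
  obtain ⟨M₁, M₂, hsplit, hM₁, hM₂⟩ :
      ∃ M₁ M₂, T.sort (· ≤ ·) = M₁ ++ M₂ ∧ (∀ y ∈ M₁, y < α) ∧ (∀ y ∈ M₂, α < y) := by
    refine ⟨(T.sort (· ≤ ·)).filter (fun y => y < α), (T.sort (· ≤ ·)).filter (fun y => α < y),
      sort_filter_split T α hαT, ?_, ?_⟩
    · intro y hy
      have := (List.mem_filter.mp hy).2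
      simpa using this
    · intro y hy
      have := (List.mem_filter.mp hy).2
      simpa using this
  have hMbound : ∀ y ∈ M₁ ++ M₂, a < y ∧ y < c := by
    intro y hy
    rw [← hsplit] at hy
    exact hTbound y ((Finset.mem_sort _).mp hy)
  -- sorted lists
  have s1 : (insert c T).sort (· ≤ ·) = (M₁ ++ M₂) ++ [c] := by
    refine sort_insert_split T c (M₁ ++ M₂) [] (by rw [hsplit, List.append_nil]) ?_ ?_
    · exact fun y hy => (hMbound y hy).2
    · intro y hy; exact absurd hy (List.not_mem_nil (a := y))
  have s5 : (insert a T).sort (· ≤ ·) = a :: (M₁ ++ M₂) := by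
    have := sort_insert_split T a [] (M₁ ++ M₂) (by rw [hsplit, List.nil_append])
      (fun y hy => absurd hy (List.not_mem_nil (a := y))) (fun y hy => (hMbound y hy).1)
    simpa using this
  have e1 : S.sort (· ≤ ·) = a :: ((M₁ ++ M₂) ++ [c]) := by
    rw [← hS]
    have := sort_insert_split (insert c T) a [] ((M₁ ++ M₂) ++ [c]) (by rw [s1, List.nil_append])
      (fun y hy => absurd hy (List.not_mem_nil (a := y))) ?_
    · simpa using this
    · intro y hy
      rcases List.mem_append.mp hy with h | h
      · exact (hMbound y h).1
      · rw [List.mem_singleton.mp h]; exact hac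
  have e2 : (insert α T).sort (· ≤ ·) = M₁ ++ α :: M₂ :=
    sort_insert_split T α M₁ M₂ hsplit hM₁ hM₂
  have e3 : (insert α (S.erase a)).sort (· ≤ ·) = (M₁ ++ α :: M₂) ++ [c] := by
    rw [← hT_c]
    have := sort_insert_split (insert c T) α M₁ (M₂ ++ [c])
      (by rw [s1, List.append_assoc]) hM₁ ?_
    · rw [this]
      simp only [List.append_assoc, List.cons_append]
    · intro y hy
      rcases List.mem_append.mp hy with h | h
      · exact hM₂ y h
      · rw [List.mem_singleton.mp h]; exact h2
  have e4 : (S.erase c).sort (· ≤ ·) = a :: (M₁ ++ M₂) := by rw [← hT_a]; exact s5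
  have e5 : (S.erase a).sort (· ≤ ·) = (M₁ ++ M₂) ++ [c] := by rw [← hT_c]; exact s1
  have e6 : (insert α (S.erase c)).sort (· ≤ ·) = a :: (M₁ ++ α :: M₂) := by
    rw [← hT_a]
    have := sort_insert_split (insert a T) α (a :: M₁) M₂ (by rw [s5]; rfl) ?_ hM₂
    · rw [this]; rfl
    · intro y hy
      rcases List.mem_cons.mp hy with rfl | h
      · exact h1
      · exact hM₁ y h
  rw [fR1_eq_FL, fR1_eq_FL, fR1_eq_FL, fR1_eq_FL, fR1_eq_FL, fR1_eq_FL,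
    e1, e2, e3, e4, e5, e6]
  exact main_list a α c M₁ M₂ ha0 h1 h2
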